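/- If a labeled graph G is realisable (its underlying simple graph is a circle graph) and G' is obtained from G by a finite sequence of graph-moves Ω4, Ω4' and deletions of vertices, then G' is realisable. In particular, the class of circle graphs is closed under local complementation, under pivoting along an edge, and under taking induced subgraphs. -/

import Mathlib

/-- A chord diagram on `n` chords: a fixed-point-free involution of the `2n`
points of a circle (the points are `Fin (2*n)` in cyclic order, the chords are
the orbits `{x, pair x}`). -/
structure ChordDiagram (n : ℕ) where
  pair : Fin (2 * n) → Fin (2 * n)
  invol : ∀ x, pair (pair x) = x
  fpf : ∀ x, pair x ≠ x

namespace ChordDiagram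

/-- Two chords (given by endpoints `x`, `y`) are linked iff their endpoint pairs
interleave in the cyclic order, i.e. exactly one endpoint of one chord lies
strictly between the two endpoints of the other. -/
def Linked {n : ℕ} (D : ChordDiagram n) (x y : Fin (2 * n)) : Prop :=
  (min x (D.pair x) < min y (D.pair y) ∧ min y (D.pair y) < max x (D.pair x) ∧
      max x (D.pair x) < max y (D.pair y)) ∨
  (min y (D.pair y) < min x (D.pair x) ∧ min x (D.pair x) < max y (D.pair y) ∧
      max y (D.pair y) < max x (D.pair x))

/-- The intersection graph of a chord diagram: vertices are the chords (each
represented by its smaller endpoint), two chords adjacent iff they are linked. -/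
def igraph {n : ℕ} (D : ChordDiagram n) :
    SimpleGraph {p : Fin (2 * n) // p < D.pair p} where
  Adj c d := D.Linked c.1 d.1
  symm := by
    refine ⟨?_⟩
    intro c d h
    unfold Linked at *
    tauto
  loopless := by
    refine ⟨?_⟩
    intro c h
    rcases h with ⟨h1, -, -⟩ | ⟨h1, -, -⟩ <;> exact absurd h1 (lt_irrefl _)

end ChordDiagram

/-- A simple graph is *realisable* (is a circle graph) if it is isomorphic to
the intersection graph of some chord diagram. -/
def IsCircleGraph {V : Type*} (G : SimpleGraph V) : Prop :=
  ∃ (n : ℕ) (D : ChordDiagram n), Nonempty (G ≃g D.igraph)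
/-- The local complement `LC(G;v)`: toggle the adjacency of every pair of
distinct vertices that are both adjacent to `v`. -/
def SimpleGraph.localComp {V : Type*} (G : SimpleGraph V) (v : V) :
    SimpleGraph V where
  Adj x y := Xor' (G.Adj x y) (x ≠ y ∧ G.Adj v x ∧ G.Adj v y)
  symm := by
    refine ⟨?_⟩
    intro x y h
    have h1 := G.adj_comm x y
    have h2 : (x ≠ y) ↔ (y ≠ x) := ne_comm
    unfold Xor' Xor at *
    tauto
  loopless := by
    refine ⟨?_⟩
    intro x h
    rcases h with ⟨h1, -⟩ | ⟨⟨h1, -⟩, -⟩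
    · exact G.loopless.irrefl x h1
    · exact h1 rfl

/-- The pivot `piv(G;u,v)`: toggle the adjacency of every pair of distinct
vertices `x, y ∉ {u,v}` such that (up to swapping `x` and `y`) `x` is adjacent
to `u`, `y` is adjacent to `v`, and `x` is not adjacent to `v` or `y` is not
adjacent to `u`. -/
def SimpleGraph.pivot {V : Type*} (G : SimpleGraph V) (u v : V) :
    SimpleGraph V where
  Adj x y := Xor' (G.Adj x y)
    (x ≠ y ∧ x ≠ u ∧ x ≠ v ∧ y ≠ u ∧ y ≠ v ∧
      ((G.Adj u x ∧ G.Adj v y ∧ (¬ G.Adj v x ∨ ¬ G.Adj u y)) ∨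
       (G.Adj u y ∧ G.Adj v x ∧ (¬ G.Adj v y ∨ ¬ G.Adj u x))))
  symm := by
    refine ⟨?_⟩
    intro x y h
    have psymm : ∀ a b : V,
        (a ≠ b ∧ a ≠ u ∧ a ≠ v ∧ b ≠ u ∧ b ≠ v ∧
          ((G.Adj u a ∧ G.Adj v b ∧ (¬ G.Adj v a ∨ ¬ G.Adj u b)) ∨
           (G.Adj u b ∧ G.Adj v a ∧ (¬ G.Adj v b ∨ ¬ G.Adj u a)))) →
        (b ≠ a ∧ b ≠ u ∧ b ≠ v ∧ a ≠ u ∧ a ≠ v ∧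
          ((G.Adj u b ∧ G.Adj v a ∧ (¬ G.Adj v b ∨ ¬ G.Adj u a)) ∨
           (G.Adj u a ∧ G.Adj v b ∧ (¬ G.Adj v a ∨ ¬ G.Adj u b)))) := by
      rintro a b ⟨h1, h2, h3, h4, h5, h6⟩
      exact ⟨h1.symm, h4, h5, h2, h3, h6.symm⟩
    unfold Xor' at h ⊢
    rcases h with ⟨ha, hnp⟩ | ⟨hp, hna⟩
    · exact Or.inl ⟨G.adj_symm ha, fun hp' => hnp (psymm y x hp')⟩
    · exact Or.inr ⟨psymm x y hp, fun ha' => hna (G.adj_symm ha')⟩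
  loopless := by
    refine ⟨?_⟩
    intro x h
    rcases h with ⟨h1, -⟩ | ⟨⟨h1, -⟩, -⟩
    · exact G.loopless.irrefl x h1
    · exact h1 rfl
/-- A *labeled graph*: a finite simple graph whose vertices (a finite set of
natural numbers) carry a framing in `ZMod 2` and a sign (`true` = `+`, `false` = `-`). -/
structure LGraph where
  verts : Finset ℕ
  adj : ℕ → ℕ → Bool
  symm : ∀ x y, adj x y = adj y x
  loopless : ∀ x, adj x x = false
  adj_mem : ∀ x y, adj x y = true → x ∈ verts ∧ y ∈ verts
  fr : ℕ → ZMod 2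
  sgn : ℕ → Bool

namespace LGraph

/-- The adjacency matrix over `ZMod 2`, with framings on the diagonal. -/
def A (G : LGraph) : Matrix G.verts G.verts (ZMod 2) :=
  fun u v => if (u : ℕ) = (v : ℕ) then G.fr u else (if G.adj u v then 1 else 0)

/-- `corank (A(G) + E)` over `ZMod 2`. -/
noncomputable def corankAE (G : LGraph) : ℕ :=
  Fintype.card G.verts - (G.A + 1).rank

/-- `corank A(G)` over `ZMod 2`. -/
noncomputable def corankA (G : LGraph) : ℕ :=
  Fintype.card G.verts - G.A.rank

end LGraph
namespace LGraph

/-- `G'` agrees with `G` (adjacency, framing and sign) away from the set `S`. -/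
def sameOutside (G G' : LGraph) (S : Finset ℕ) : Prop :=
  (∀ x y, x ∉ S → y ∉ S → G'.adj x y = G.adj x y) ∧
  (∀ x, x ∉ S → G'.fr x = G.fr x ∧ G'.sgn x = G.sgn x)

/-- Ω1 (addition direction): `G'` is obtained from `G` by adding the isolated
vertex `v` with framing `0` and arbitrary sign. -/
def Omega1AddAt (G G' : LGraph) (v : ℕ) : Prop :=
  v ∉ G.verts ∧ G'.verts = insert v G.verts ∧ G'.fr v = 0 ∧
    (∀ x, G'.adj v x = false) ∧ sameOutside G G' {v}

/-- Ω2 (addition direction): `G'` is obtained from `G` by adding two vertices `u, v`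
with the same adjacencies with all other vertices, opposite signs, either
non-adjacent with framings `0` or adjacent with framings `1`. -/
def Omega2AddAt (G G' : LGraph) (u v : ℕ) : Prop :=
  u ≠ v ∧ u ∉ G.verts ∧ v ∉ G.verts ∧
    G'.verts = insert u (insert v G.verts) ∧
    G'.sgn u = !(G'.sgn v) ∧
    (∀ x, x ≠ u → x ≠ v → G'.adj u x = G'.adj v x) ∧
    ((G'.adj u v = false ∧ G'.fr u = 0 ∧ G'.fr v = 0) ∨
     (G'.adj u v = true ∧ G'.fr u = 1 ∧ G'.fr v = 1)) ∧
    sameOutside G G' {u, v}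

/-- Ω3 (forward direction) at vertices `u, v, w`, all labeled `(0,-)`, with `u`
adjacent exactly to `v` and `w`: the adjacency of `u` with every vertex lying in
exactly one of `N(v)`, `N(w)` is toggled and the signs of `v`,`w` become `+`. -/
def Omega3FwdAt (G G' : LGraph) (u v w : ℕ) : Prop :=
  u ≠ v ∧ u ≠ w ∧ v ≠ w ∧ u ∈ G.verts ∧ v ∈ G.verts ∧ w ∈ G.verts ∧
    G.fr u = 0 ∧ G.fr v = 0 ∧ G.fr w = 0 ∧
    G.sgn u = false ∧ G.sgn v = false ∧ G.sgn w = false ∧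
    (∀ x, G.adj u x = true ↔ (x = v ∨ x = w)) ∧
    G'.verts = G.verts ∧
    (∀ x, G'.adj u x = xor (xor (G.adj v x) (G.adj w x)) (G.adj u x)) ∧
    (∀ x y, x ≠ u → y ≠ u → G'.adj x y = G.adj x y) ∧
    G'.fr u = 0 ∧ G'.sgn u = false ∧
    G'.fr v = 0 ∧ G'.sgn v = true ∧ G'.fr w = 0 ∧ G'.sgn w = true ∧
    (∀ x, x ≠ u → x ≠ v → x ≠ w → (G'.fr x = G.fr x ∧ G'.sgn x = G.sgn x))

/-- The (one-sided) pivot toggling condition at `u, v` for the pair `x, y`: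
`x` is adjacent to `u`, `y` is adjacent to `v`, and `x` is not adjacent to `v`
or `y` is not adjacent to `u`. -/
def pivCond (G : LGraph) (u v x y : ℕ) : Prop :=
  G.adj u x = true ∧ G.adj v y = true ∧ (G.adj v x = false ∨ G.adj u y = false)

instance pivCond.instDecidable (G : LGraph) (u v x y : ℕ) :
    Decidable (pivCond G u v x y) := by
  unfold pivCond; infer_instance

/-- Ω4 at adjacent vertices `u, v` labeled `(0,α)`, `(0,β)`: `G'` is the pivot
`piv(G;u,v)` with the sign of `u` set to `-β` and the sign of `v` set to `-α`. -/
def Omega4At (G G' : LGraph) (u v : ℕ) : Prop :=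
  u ≠ v ∧ G.adj u v = true ∧ G.fr u = 0 ∧ G.fr v = 0 ∧
    G'.verts = G.verts ∧
    (∀ x y, G'.adj x y =
      (if x ≠ y ∧ x ∉ ({u, v} : Finset ℕ) ∧ y ∉ ({u, v} : Finset ℕ) ∧
          (pivCond G u v x y ∨ pivCond G u v y x)
       then !(G.adj x y) else G.adj x y)) ∧
    G'.fr u = 0 ∧ G'.fr v = 0 ∧
    G'.sgn u = !(G.sgn v) ∧ G'.sgn v = !(G.sgn u) ∧
    (∀ x, x ≠ u → x ≠ v → (G'.fr x = G.fr x ∧ G'.sgn x = G.sgn x))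

/-- Ω4' at a vertex `v` labeled `(1,α)`: `G'` is the local complement `LC(G;v)`
with the sign of `v` changed to `-α` and the framing of every neighbour of `v` toggled. -/
def Omega4pAt (G G' : LGraph) (v : ℕ) : Prop :=
  v ∈ G.verts ∧ G.fr v = 1 ∧
    G'.verts = G.verts ∧
    (∀ x y, G'.adj x y =
      (if x ≠ y ∧ G.adj v x = true ∧ G.adj v y = true
       then !(G.adj x y) else G.adj x y)) ∧
    G'.fr v = G.fr v ∧ G'.sgn v = !(G.sgn v) ∧
    (∀ x, x ≠ v → G'.sgn x = G.sgn x) ∧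
    (∀ x, x ≠ v → G'.fr x = (if G.adj v x then G.fr x + 1 else G.fr x))

/-- A single graph-move `Ω1`–`Ω4'` (in either direction). -/
inductive Move : LGraph → LGraph → Prop
  | o1a {G G' v} : Omega1AddAt G G' v → Move G G'
  | o1r {G G' v} : Omega1AddAt G' G v → Move G G'
  | o2a {G G' u v} : Omega2AddAt G G' u v → Move G G'
  | o2r {G G' u v} : Omega2AddAt G' G u v → Move G G'
  | o3f {G G' u v w} : Omega3FwdAt G G' u v w → Move G G'
  | o3b {G G' u v w} : Omega3FwdAt G' G u v w → Move G G'
  | o4 {G G' u v} : Omega4At G G' u v → Move G G'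
  | o4i {G G' u v} : Omega4At G' G u v → Move G G'
  | o4p {G G' v} : Omega4pAt G G' v → Move G G'
  | o4pi {G G' v} : Omega4pAt G' G v → Move G G'

end LGraph
namespace LGraph

/-- The labeled graph obtained from `G` by deleting the vertex `v`. -/
def delete (G : LGraph) (v : ℕ) : LGraph where
  verts := G.verts.erase v
  adj := fun x y => decide (x ≠ v) && decide (y ≠ v) && G.adj x y
  symm := by
    intro x y
    cases h1 : decide (x ≠ v) <;> cases h2 : decide (y ≠ v) <;>
      simp [h1, h2, G.symm x y]
  loopless := by intro x; simp [G.loopless x]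
  adj_mem := by
    intro x y h
    simp only [Bool.and_eq_true, decide_eq_true_eq] at h
    exact ⟨Finset.mem_erase.2 ⟨h.1.1, (G.adj_mem x y h.2).1⟩,
           Finset.mem_erase.2 ⟨h.1.2, (G.adj_mem x y h.2).2⟩⟩
  fr := G.fr
  sgn := G.sgn

end LGraph
namespace LGraph

/-- The underlying simple graph of a labeled graph, on its vertex set. -/
def toSimple (G : LGraph) : SimpleGraph G.verts where
  Adj x y := G.adj x y = true
  symm := by refine ⟨?_⟩; intro x y h; rwa [G.symm] at h
  loopless := by refine ⟨?_⟩; intro x h; rw [G.loopless] at h; exact Bool.false_ne_true h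

/-- One step: a graph-move `Ω4`, a graph-move `Ω4'`, or the deletion of a vertex. -/
inductive RStep : LGraph → LGraph → Prop
  | o4 {G G' u v} : Omega4At G G' u v → RStep G G'
  | o4p {G G' v} : Omega4pAt G G' v → RStep G G'
  | del (G : LGraph) (v : ℕ) : RStep G (G.delete v)

end LGraph


namespace CGAux

set_option maxHeartbeats 1000000

/-! ### Arithmetic core -/

def itl' (p q r s : ℕ) : Prop := (p < r ∧ r < q ∧ q < s) ∨ (r < p ∧ p < s ∧ s < q)

def itlm (p q r s : ℕ) : Prop :=
  (min p q < min r s ∧ min r s < max p q ∧ max p q < max r s) ∨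
  (min r s < min p q ∧ min p q < max r s ∧ max r s < max p q)

theorem classify (a b x y fx fy F G : ℕ) (hab : a < b) (hxy : x < y)
    (hch : (x = a ∧ y = b) ∨ (x ≠ a ∧ x ≠ b ∧ y ≠ a ∧ y ≠ b))
    (hfx : (a < x ∧ x < b ∧ fx + x = a + b) ∨ (¬(a < x ∧ x < b) ∧ fx = x))
    (hfy : (a < y ∧ y < b ∧ fy + y = a + b) ∨ (¬(a < y ∧ y < b) ∧ fy = y))
    (hm : (F = fx ∧ G = fy) ∨ (F = fy ∧ G = fx)) (hFG : F < G) :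
    (x = a ∧ y = b ∧ F = x ∧ G = y) ∨
    (a < x ∧ y < b ∧ F + y = a + b ∧ G + x = a + b) ∨
    (¬(a < x ∧ x < b) ∧ ¬(a < y ∧ y < b) ∧ (x ≠ a ∧ x ≠ b ∧ y ≠ a ∧ y ≠ b) ∧ F = x ∧ G = y) ∨
    (x < a ∧ a < y ∧ y < b ∧ F = x ∧ G + y = a + b) ∨
    (a < x ∧ x < b ∧ b < y ∧ F + x = a + b ∧ G = y) := by
  rcases hch with ⟨hxa, hyb⟩ | hch
  · exact Or.inl (by omega)
  · rcases hfx with hfx | hfx <;> rcases hfy with hfy | hfy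
    · exact Or.inr (Or.inl (by omega))
    · exact Or.inr (Or.inr (Or.inr (Or.inr (by omega))))
    · exact Or.inr (Or.inr (Or.inr (Or.inl (by omega))))
    · exact Or.inr (Or.inr (Or.inl (by omega)))

theorem crux (a b x1 y1 x2 y2 F1 G1 F2 G2 : ℕ)
    (hab : a < b) (ho1 : x1 < y1) (ho2 : x2 < y2)
    (hd1 : x1 ≠ x2) (hd2 : x1 ≠ y2) (hd3 : y1 ≠ x2) (hd4 : y1 ≠ y2)
    (H1 : (x1 = a ∧ y1 = b ∧ F1 = x1 ∧ G1 = y1) ∨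
      (a < x1 ∧ y1 < b ∧ F1 + y1 = a + b ∧ G1 + x1 = a + b) ∨
      (¬(a < x1 ∧ x1 < b) ∧ ¬(a < y1 ∧ y1 < b) ∧ (x1 ≠ a ∧ x1 ≠ b ∧ y1 ≠ a ∧ y1 ≠ b) ∧ F1 = x1 ∧ G1 = y1) ∨
      (x1 < a ∧ a < y1 ∧ y1 < b ∧ F1 = x1 ∧ G1 + y1 = a + b) ∨
      (a < x1 ∧ x1 < b ∧ b < y1 ∧ F1 + x1 = a + b ∧ G1 = y1))
    (H2 : (x2 = a ∧ y2 = b ∧ F2 = x2 ∧ G2 = y2) ∨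
      (a < x2 ∧ y2 < b ∧ F2 + y2 = a + b ∧ G2 + x2 = a + b) ∨
      (¬(a < x2 ∧ x2 < b) ∧ ¬(a < y2 ∧ y2 < b) ∧ (x2 ≠ a ∧ x2 ≠ b ∧ y2 ≠ a ∧ y2 ≠ b) ∧ F2 = x2 ∧ G2 = y2) ∨
      (x2 < a ∧ a < y2 ∧ y2 < b ∧ F2 = x2 ∧ G2 + y2 = a + b) ∨
      (a < x2 ∧ x2 < b ∧ b < y2 ∧ F2 + x2 = a + b ∧ G2 = y2)) :
    itl' F1 G1 F2 G2 ↔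
      ¬ (itl' x1 y1 x2 y2 ↔ (itl' x1 y1 a b ∧ itl' x2 y2 a b)) := by
  unfold itl'
  rcases H1 with H1|H1|H1|H1|H1 <;> rcases H2 with H2|H2|H2|H2|H2 <;> omega

/-! ### Fin and Linked basics -/

theorem fin_val_min {m : ℕ} (u w : Fin m) : ((min u w : Fin m) : ℕ) = min (u : ℕ) (w : ℕ) := by
  rcases le_total u w with h | h
  · rw [min_eq_left h, min_eq_left (Fin.le_def.mp h)]
  · rw [min_eq_right h, min_eq_right (Fin.le_def.mp h)]

theorem fin_val_max {m : ℕ} (u w : Fin m) : ((max u w : Fin m) : ℕ) = max (u : ℕ) (w : ℕ) := by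
  rcases le_total u w with h | h
  · rw [max_eq_right h, max_eq_right (Fin.le_def.mp h)]
  · rw [max_eq_left h, max_eq_left (Fin.le_def.mp h)]

theorem pair_inj {n : ℕ} (D : ChordDiagram n) : Function.Injective D.pair := by
  intro x y h
  have h2 := congrArg D.pair h
  rwa [D.invol, D.invol] at h2

theorem linked_iff_itlm {n : ℕ} (D : ChordDiagram n) (x y : Fin (2*n)) :
    D.Linked x y ↔ itlm (x : ℕ) ((D.pair x : Fin (2*n)) : ℕ) (y : ℕ) ((D.pair y : Fin (2*n)) : ℕ) := by
  unfold ChordDiagram.Linked itlm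
  simp only [Fin.lt_def, fin_val_min, fin_val_max]

theorem linked_symm {n : ℕ} (D : ChordDiagram n) (x y : Fin (2*n)) :
    D.Linked x y ↔ D.Linked y x := by
  unfold ChordDiagram.Linked; tauto

theorem linked_irrefl {n : ℕ} (D : ChordDiagram n) (x : Fin (2*n)) : ¬ D.Linked x x := by
  unfold ChordDiagram.Linked
  rintro (⟨h, -, -⟩ | ⟨h, -, -⟩) <;> exact absurd h (lt_irrefl _)

theorem linked_pair_left {n : ℕ} (D : ChordDiagram n) (x y : Fin (2*n)) :
    D.Linked (D.pair x) y ↔ D.Linked x y := by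
  unfold ChordDiagram.Linked
  rw [D.invol, min_comm (D.pair x) x, max_comm (D.pair x) x]

theorem linked_min_left {n : ℕ} (D : ChordDiagram n) (x y : Fin (2*n)) :
    D.Linked (min x (D.pair x)) y ↔ D.Linked x y := by
  rcases le_total x (D.pair x) with h | h
  · rw [min_eq_left h]
  · rw [min_eq_right h, linked_pair_left]

end CGAux

namespace CGAux

set_option maxHeartbeats 1000000

/-! ### The reflection map -/

def refl2 {n : ℕ} (a b : Fin (2*n)) : Fin (2*n) → Fin (2*n) := fun x =>
  if h : (a : ℕ) < (x : ℕ) ∧ (x : ℕ) < (b : ℕ) then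
    ⟨(a : ℕ) + (b : ℕ) - (x : ℕ), by have hb := b.isLt; omega⟩
  else x

theorem refl2_spec {n : ℕ} (a b : Fin (2*n)) (x : Fin (2*n)) :
    ((a:ℕ) < (x:ℕ) ∧ (x:ℕ) < (b:ℕ) ∧ ((refl2 a b x : Fin (2*n)) : ℕ) + (x:ℕ) = (a:ℕ) + (b:ℕ)) ∨
    (¬((a:ℕ) < (x:ℕ) ∧ (x:ℕ) < (b:ℕ)) ∧ ((refl2 a b x : Fin (2*n)) : ℕ) = (x:ℕ)) := by
  unfold refl2
  split_ifs with h
  · exact Or.inl ⟨h.1, h.2, by simp only [Fin.val_mk]; omega⟩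
  · exact Or.inr ⟨h, rfl⟩

theorem refl2_invol {n : ℕ} (a b : Fin (2*n)) (hab : (a:ℕ) < (b:ℕ)) (x : Fin (2*n)) :
    refl2 a b (refl2 a b x) = x := by
  have s1 := refl2_spec a b x
  have s2 := refl2_spec a b (refl2 a b x)
  exact Fin.ext (by omega)

theorem refl2_inj {n : ℕ} (a b : Fin (2*n)) (hab : (a:ℕ) < (b:ℕ)) {x y : Fin (2*n)}
    (h : refl2 a b x = refl2 a b y) : x = y := by
  have h2 := congrArg (refl2 a b) h
  rwa [refl2_invol a b hab, refl2_invol a b hab] at h2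

/-! ### The local complement diagram -/

def lcD {n : ℕ} (D : ChordDiagram n) (a : Fin (2*n)) (ha : a < D.pair a) : ChordDiagram n where
  pair := fun x => refl2 a (D.pair a) (D.pair (refl2 a (D.pair a) x))
  invol := by
    intro x
    show refl2 a (D.pair a) (D.pair (refl2 a (D.pair a)
      (refl2 a (D.pair a) (D.pair (refl2 a (D.pair a) x))))) = x
    rw [refl2_invol a (D.pair a) (Fin.lt_def.mp ha), D.invol,
      refl2_invol a (D.pair a) (Fin.lt_def.mp ha)]
  fpf := by
    intro x h
    have h2 : D.pair (refl2 a (D.pair a) x) = refl2 a (D.pair a) x :=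
      refl2_inj a (D.pair a) (Fin.lt_def.mp ha)
        (h.trans (refl2_invol a (D.pair a) (Fin.lt_def.mp ha) x).symm)
    exact D.fpf _ h2

theorem pair_lcD {n : ℕ} (D : ChordDiagram n) (a : Fin (2*n)) (ha : a < D.pair a)
    (x : Fin (2*n)) :
    (lcD D a ha).pair (refl2 a (D.pair a) x) = refl2 a (D.pair a) (D.pair x) := by
  show refl2 a (D.pair a) (D.pair (refl2 a (D.pair a) (refl2 a (D.pair a) x))) = _
  rw [refl2_invol a (D.pair a) (Fin.lt_def.mp ha)]

/-! ### Chord correspondences -/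

theorem comm_symm {m : ℕ} {f p p' : Fin m → Fin m} (hf : ∀ x, f (f x) = x)
    (hcomm : ∀ x, p' (f x) = f (p x)) (x : Fin m) : p (f x) = f (p' x) := by
  have h := hcomm (f x)
  rw [hf] at h
  rw [h, hf]

theorem chmap_lt {m : ℕ} (f p p' : Fin m → Fin m) (hf : ∀ x, f (f x) = x)
    (hp : ∀ x, p (p x) = x) (hcomm : ∀ x, p' (f x) = f (p x))
    {c : Fin m} (hc : c < p c) :
    min (f c) (f (p c)) < p' (min (f c) (f (p c))) := by
  have hne : f c ≠ f (p c) := by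
    intro h
    have h2 := congrArg f h
    rw [hf, hf] at h2
    exact absurd h2 (ne_of_lt hc)
  rcases le_total (f c) (f (p c)) with h | h
  · rw [min_eq_left h, hcomm]
    exact lt_of_le_of_ne h hne
  · rw [min_eq_right h, hcomm, hp]
    exact lt_of_le_of_ne h (Ne.symm hne)

theorem chmap_min {m : ℕ} (f p p' : Fin m → Fin m) (hf : ∀ x, f (f x) = x)
    (hp : ∀ x, p (p x) = x) (hcomm : ∀ x, p' (f x) = f (p x))
    {c : Fin m} (hc : c < p c) :
    min (f (min (f c) (f (p c)))) (f (p' (min (f c) (f (p c))))) = c := by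
  rcases le_total (f c) (f (p c)) with h | h
  · rw [min_eq_left h, hcomm]
    simp only [hf]
    exact min_eq_left (le_of_lt hc)
  · rw [min_eq_right h, hcomm]
    simp only [hp, hf]
    exact min_eq_right (le_of_lt hc)

end CGAux

namespace CGAux

set_option maxHeartbeats 2000000

theorem minmax_hm (u v : ℕ) : (min u v = u ∧ max u v = v) ∨ (min u v = v ∧ max u v = u) := by
  omega

theorem min_lt_max_of_ne {u v : ℕ} (h : u ≠ v) : min u v < max u v := by omega

theorem itlm_itl'_minmax (p q r s : ℕ) (hpq : p ≠ q) (hrs : r ≠ s) :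
    itlm p q r s ↔ itl' (min p q) (max p q) (min r s) (max r s) := by
  unfold itlm itl'; omega

theorem itlm_sorted (p q r s : ℕ) (h1 : p < q) (h2 : r < s) :
    itlm p q r s ↔ itl' p q r s := by
  unfold itlm itl'; omega

theorem itlm_swap_sorted (p q r s : ℕ) (h1 : p < q) (h2 : r < s) :
    itlm p q r s ↔ itl' r s p q := by
  unfold itlm itl'; omega

theorem xor_bridge (P Q R L N : Prop) (hL : L ↔ ¬(P ↔ Q ∧ R)) (hN : N) :
    L ↔ Xor' P (N ∧ Q ∧ R) := by
  unfold Xor' Xor; tauto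

def lcIso {n : ℕ} (D : ChordDiagram n) (vc : {p : Fin (2*n) // p < D.pair p}) :
    ((D.igraph).localComp vc) ≃g (lcD D vc.1 vc.2).igraph := by
  classical
  set a := vc.1 with ha'
  set b := D.pair vc.1 with hb'
  set f := refl2 a b with hfdef
  have hab : (a:ℕ) < (b:ℕ) := Fin.lt_def.mp vc.2
  have hf : ∀ x, f (f x) = x := refl2_invol a b hab
  set E := lcD D vc.1 vc.2 with hE'
  have hcomm : ∀ x, E.pair (f x) = f (D.pair x) := pair_lcD D vc.1 vc.2
  have hcomm' : ∀ x, D.pair (f x) = f (E.pair x) := comm_symm hf hcomm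
  refine ⟨⟨fun c => ⟨min (f c.1) (f (D.pair c.1)), chmap_lt f D.pair E.pair hf D.invol hcomm c.2⟩,
          fun q => ⟨min (f q.1) (f (E.pair q.1)), chmap_lt f E.pair D.pair hf E.invol hcomm' q.2⟩,
          fun c => Subtype.ext (chmap_min f D.pair E.pair hf D.invol hcomm c.2),
          fun q => Subtype.ext (chmap_min f E.pair D.pair hf E.invol hcomm' q.2)⟩, ?_⟩
  intro c d
  show E.Linked (min (f c.1) (f (D.pair c.1))) (min (f d.1) (f (D.pair d.1))) ↔ _
  have hL : E.Linked (min (f c.1) (f (D.pair c.1))) (min (f d.1) (f (D.pair d.1))) ↔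
      E.Linked (f c.1) (f d.1) := by
    rw [show f (D.pair c.1) = E.pair (f c.1) from (hcomm c.1).symm, linked_min_left,
      linked_symm E,
      show f (D.pair d.1) = E.pair (f d.1) from (hcomm d.1).symm, linked_min_left,
      linked_symm E]
  rw [hL]
  show _ ↔ Xor' (D.Linked c.1 d.1) (c ≠ d ∧ D.Linked vc.1 c.1 ∧ D.Linked vc.1 d.1)
  by_cases hcd : c = d
  · subst hcd
    simp [Xor', linked_irrefl]
  · have hc2 : (c.1 : ℕ) < ((D.pair c.1) : ℕ) := Fin.lt_def.mp c.2
    have hd2 : (d.1 : ℕ) < ((D.pair d.1) : ℕ) := Fin.lt_def.mp d.2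
    have hne1 : c.1 ≠ d.1 := fun h => hcd (Subtype.ext h)
    have hv1 : (c.1 : ℕ) ≠ (d.1 : ℕ) := fun h => hne1 (Fin.ext h)
    have hvpp : ((D.pair c.1) : ℕ) ≠ ((D.pair d.1) : ℕ) :=
      fun h => hne1 (pair_inj D (Fin.ext h))
    have hvxp : (c.1 : ℕ) ≠ ((D.pair d.1) : ℕ) := by
      intro h
      have hfin : c.1 = D.pair d.1 := Fin.ext h
      have h2 : D.pair c.1 = d.1 := by rw [hfin, D.invol]
      have h3 := congrArg Fin.val h2
      omega
    have hvyx : ((D.pair c.1) : ℕ) ≠ (d.1 : ℕ) := by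
      intro h
      have hfin : D.pair c.1 = d.1 := Fin.ext h
      have h2 : c.1 = D.pair d.1 := by rw [← hfin, D.invol]
      have h3 := congrArg Fin.val h2
      omega
    have hchgen : ∀ e : {p : Fin (2*n) // p < D.pair p},
        ((e.1 : ℕ) = (a : ℕ) ∧ ((D.pair e.1) : ℕ) = (b : ℕ)) ∨
        ((e.1 : ℕ) ≠ (a : ℕ) ∧ (e.1 : ℕ) ≠ (b : ℕ) ∧
          ((D.pair e.1) : ℕ) ≠ (a : ℕ) ∧ ((D.pair e.1) : ℕ) ≠ (b : ℕ)) := by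
      intro e
      have he2 : (e.1 : ℕ) < ((D.pair e.1) : ℕ) := Fin.lt_def.mp e.2
      by_cases hev : e.1 = a
      · left
        constructor
        · exact congrArg Fin.val hev
        · rw [hev]
      · right
        refine ⟨fun h => hev (Fin.ext h), ?_, ?_, ?_⟩
        · intro h
          have hfin : e.1 = b := Fin.ext h
          have h2 : D.pair e.1 = a := by rw [hfin, hb', D.invol]
          have h3 := congrArg Fin.val h2
          omega
        · intro h
          have hfin : D.pair e.1 = a := Fin.ext h
          have h2 : e.1 = b := by rw [← D.invol e.1, hfin]
          have h3 := congrArg Fin.val h2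
          omega
        · intro h
          have hfin : D.pair e.1 = b := Fin.ext h
          have h2 : e.1 = a := pair_inj D hfin
          exact hev h2
    have sc1 := refl2_spec a b c.1
    have sc2 := refl2_spec a b (D.pair c.1)
    have sd1 := refl2_spec a b d.1
    have sd2 := refl2_spec a b (D.pair d.1)
    have hfg1 : ((f c.1) : ℕ) ≠ ((f (D.pair c.1)) : ℕ) := by
      intro h
      have h2 := refl2_inj a b hab (Fin.ext h)
      exact (ne_of_lt c.2) h2
    have hfg2 : ((f d.1) : ℕ) ≠ ((f (D.pair d.1)) : ℕ) := by
      intro h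
      have h2 := refl2_inj a b hab (Fin.ext h)
      exact (ne_of_lt d.2) h2
    have H1 := classify (a : ℕ) (b : ℕ) (c.1 : ℕ) ((D.pair c.1) : ℕ)
      ((f c.1) : ℕ) ((f (D.pair c.1)) : ℕ)
      (min ((f c.1) : ℕ) ((f (D.pair c.1)) : ℕ)) (max ((f c.1) : ℕ) ((f (D.pair c.1)) : ℕ))
      hab hc2 (hchgen c) sc1 sc2 (minmax_hm _ _) (min_lt_max_of_ne hfg1)
    have H2 := classify (a : ℕ) (b : ℕ) (d.1 : ℕ) ((D.pair d.1) : ℕ)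
      ((f d.1) : ℕ) ((f (D.pair d.1)) : ℕ)
      (min ((f d.1) : ℕ) ((f (D.pair d.1)) : ℕ)) (max ((f d.1) : ℕ) ((f (D.pair d.1)) : ℕ))
      hab hd2 (hchgen d) sd1 sd2 (minmax_hm _ _) (min_lt_max_of_ne hfg2)
    have HC := crux (a : ℕ) (b : ℕ) (c.1 : ℕ) ((D.pair c.1) : ℕ) (d.1 : ℕ) ((D.pair d.1) : ℕ)
      _ _ _ _ hab hc2 hd2 hv1 hvxp hvyx hvpp H1 H2
    have bL : E.Linked (f c.1) (f d.1) ↔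
        itl' (min ((f c.1) : ℕ) ((f (D.pair c.1)) : ℕ)) (max ((f c.1) : ℕ) ((f (D.pair c.1)) : ℕ))
          (min ((f d.1) : ℕ) ((f (D.pair d.1)) : ℕ)) (max ((f d.1) : ℕ) ((f (D.pair d.1)) : ℕ)) := by
      rw [linked_iff_itlm, hcomm c.1, hcomm d.1]
      exact itlm_itl'_minmax _ _ _ _ hfg1 hfg2
    have b12 : D.Linked c.1 d.1 ↔
        itl' (c.1 : ℕ) ((D.pair c.1) : ℕ) (d.1 : ℕ) ((D.pair d.1) : ℕ) := by
      rw [linked_iff_itlm]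
      exact itlm_sorted _ _ _ _ hc2 hd2
    have b1v : D.Linked vc.1 c.1 ↔ itl' (c.1 : ℕ) ((D.pair c.1) : ℕ) (a : ℕ) (b : ℕ) := by
      rw [linked_iff_itlm]
      exact itlm_swap_sorted _ _ _ _ hab hc2
    have b2v : D.Linked vc.1 d.1 ↔ itl' (d.1 : ℕ) ((D.pair d.1) : ℕ) (a : ℕ) (b : ℕ) := by
      rw [linked_iff_itlm]
      exact itlm_swap_sorted _ _ _ _ hab hd2
    rw [← b12, ← b1v, ← b2v] at HC
    rw [bL]
    exact xor_bridge _ _ _ _ _ HC hcd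

end CGAux

namespace CGAux

set_option maxHeartbeats 2000000

theorem circle_of_iso {V W : Type*} {G : SimpleGraph V} {H : SimpleGraph W}
    (e : G ≃g H) (h : IsCircleGraph H) : IsCircleGraph G := by
  obtain ⟨n, D, ⟨i⟩⟩ := h
  exact ⟨n, D, ⟨e.trans i⟩⟩

theorem localComp_adj {V : Type*} (G : SimpleGraph V) (v x y : V) :
    (G.localComp v).Adj x y ↔ Xor' (G.Adj x y) (x ≠ y ∧ G.Adj v x ∧ G.Adj v y) := Iff.rfl

theorem pivot_adj {V : Type*} (G : SimpleGraph V) (u v x y : V) :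
    (G.pivot u v).Adj x y ↔ Xor' (G.Adj x y)
      (x ≠ y ∧ x ≠ u ∧ x ≠ v ∧ y ≠ u ∧ y ≠ v ∧
        ((G.Adj u x ∧ G.Adj v y ∧ (¬ G.Adj v x ∨ ¬ G.Adj u y)) ∨
         (G.Adj u y ∧ G.Adj v x ∧ (¬ G.Adj v y ∨ ¬ G.Adj u x)))) := Iff.rfl

def lcTransport {V W : Type*} {G : SimpleGraph V} {H : SimpleGraph W} (e : G ≃g H) (v : V) :
    (G.localComp v) ≃g (H.localComp (e v)) := by
  refine ⟨e.toEquiv, ?_⟩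
  intro x y
  have h1 : ∀ p q : V, H.Adj (e.toEquiv p) (e.toEquiv q) ↔ G.Adj p q := fun p q => e.map_rel_iff
  have h1' : ∀ p : V, H.Adj (e v) (e.toEquiv p) ↔ G.Adj v p := fun p => e.map_rel_iff
  have h2 : ∀ p q : V, (e.toEquiv p ≠ e.toEquiv q) ↔ p ≠ q :=
    fun p q => not_congr (Equiv.apply_eq_iff_eq _)
  rw [localComp_adj, localComp_adj, h1, h1', h1', h2]

theorem lc_circle {V : Type*} (G : SimpleGraph V) (v : V) (h : IsCircleGraph G) :
    IsCircleGraph (G.localComp v) := by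
  obtain ⟨n, D, ⟨e⟩⟩ := h
  exact ⟨n, lcD D (e v).1 (e v).2, ⟨(lcTransport e v).trans (lcIso D (e v))⟩⟩

noncomputable def pivotIso {V : Type*} (G : SimpleGraph V) (u v : V) (huv : G.Adj u v) :
    (G.pivot u v) ≃g (((G.localComp u).localComp v).localComp u) := by
  classical
  have hvu : G.Adj v u := huv.symm
  have hne : u ≠ v := G.ne_of_adj huv
  have hne' : v ≠ u := hne.symm
  have hnuu : ¬ G.Adj u u := G.irrefl
  have hnvv : ¬ G.Adj v v := G.irrefl
  refine ⟨Equiv.swap u v, ?_⟩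
  intro x y
  rcases eq_or_ne x y with rfl | hxy
  · simp [SimpleGraph.irrefl]
  rcases eq_or_ne x u with hx | hxu
  · rcases eq_or_ne y u with hy | hyu
    · exact absurd (hx.trans hy.symm) hxy
    · rcases eq_or_ne y v with hy | hyv
      · rw [hx, hy, Equiv.swap_apply_left, Equiv.swap_apply_right]
        simp [localComp_adj, pivot_adj, Xor', hne, hne', huv, hvu, hnuu, hnvv, G.adj_comm v u]
      · rw [hx, Equiv.swap_apply_left, Equiv.swap_apply_of_ne_of_ne hyu hyv]
        subst hx
        by_cases A : G.Adj x y <;> by_cases B : G.Adj v y <;>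
          simp_all [localComp_adj, pivot_adj, Xor', hne, hne', hyu, hyv, hyu.symm, hyv.symm,
            G.adj_comm y x, G.adj_comm y v, G.adj_comm v x]
  · rcases eq_or_ne x v with hx | hxv
    · rcases eq_or_ne y u with hy | hyu
      · rw [hx, hy, Equiv.swap_apply_right, Equiv.swap_apply_left]
        simp [localComp_adj, pivot_adj, Xor', hne, hne', huv, hvu, hnuu, hnvv, G.adj_comm v u]
      · rcases eq_or_ne y v with hy | hyv
        · exact absurd (hx.trans hy.symm) hxy
        · rw [hx, Equiv.swap_apply_right, Equiv.swap_apply_of_ne_of_ne hyu hyv]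
          subst hx
          by_cases A : G.Adj x y <;> by_cases B : G.Adj u y <;>
            simp_all [localComp_adj, pivot_adj, Xor', hne, hne', hyu, hyv, hyu.symm, hyv.symm,
              G.adj_comm y x, G.adj_comm y u, G.adj_comm u x]
    · rcases eq_or_ne y u with hy | hyu
      · rw [hy, Equiv.swap_apply_left, Equiv.swap_apply_of_ne_of_ne hxu hxv]
        subst hy
        by_cases A : G.Adj x y <;> by_cases B : G.Adj v x <;>
          simp_all [localComp_adj, pivot_adj, Xor', hne, hne', hxu, hxv, hxu.symm, hxv.symm,
            G.adj_comm x y, G.adj_comm x v, G.adj_comm v y]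
      · rcases eq_or_ne y v with hy | hyv
        · rw [hy, Equiv.swap_apply_right, Equiv.swap_apply_of_ne_of_ne hxu hxv]
          subst hy
          by_cases A : G.Adj x y <;> by_cases B : G.Adj u x <;>
            simp_all [localComp_adj, pivot_adj, Xor', hne, hne', hxu, hxv, hxu.symm, hxv.symm,
              G.adj_comm x y, G.adj_comm x u, G.adj_comm u y]
        · rw [Equiv.swap_apply_of_ne_of_ne hxu hxv, Equiv.swap_apply_of_ne_of_ne hyu hyv]
          by_cases A : G.Adj x y <;> by_cases B1 : G.Adj u x <;> by_cases B2 : G.Adj v x <;>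
            by_cases B3 : G.Adj u y <;> by_cases B4 : G.Adj v y <;>
            simp_all [localComp_adj, pivot_adj, Xor', hne, hne', hxy, hxy.symm,
              hxu, hxv, hyu, hyv, hxu.symm, hxv.symm, hyu.symm, hyv.symm]

theorem pivot_circle {V : Type*} (G : SimpleGraph V) (u v : V) (huv : G.Adj u v)
    (h : IsCircleGraph G) : IsCircleGraph (G.pivot u v) :=
  circle_of_iso (pivotIso G u v huv)
    (lc_circle _ u (lc_circle _ v (lc_circle _ u h)))

end CGAux

namespace CGAux

set_option maxHeartbeats 1000000

section Delete

variable {n : ℕ} (D : ChordDiagram n) (c : {p : Fin (2*n) // p < D.pair p})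

def delK : Finset (Fin (2*n)) := ({c.1, D.pair c.1} : Finset (Fin (2*n)))ᶜ

theorem mem_delK (x : Fin (2*n)) : x ∈ delK D c ↔ x ≠ c.1 ∧ x ≠ D.pair c.1 := by
  simp [delK, Finset.mem_compl, Finset.mem_insert, Finset.mem_singleton, not_or]

theorem delK_card (hn : 1 ≤ n) : (delK D c).card = 2*(n-1) := by
  have h2 : ({c.1, D.pair c.1} : Finset (Fin (2*n))).card = 2 := by
    rw [Finset.card_insert_of_notMem (by simp [Finset.mem_singleton]; exact ne_of_lt c.2),
      Finset.card_singleton]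
  rw [delK, Finset.card_compl, h2, Fintype.card_fin]
  omega

theorem pair_mem_delK {x : Fin (2*n)} (hx : x ∈ delK D c) : D.pair x ∈ delK D c := by
  rw [mem_delK] at hx ⊢
  constructor
  · intro h
    exact hx.2 (by rw [← D.invol x, h])
  · intro h
    exact hx.1 (pair_inj D h)

variable (hn : 1 ≤ n)

noncomputable def delG : Fin (2*(n-1)) ≃o {x // x ∈ delK D c} :=
  (delK D c).orderIsoOfFin (delK_card D c hn)

noncomputable def delD : ChordDiagram (n-1) where
  pair x := (delG D c hn).symm ⟨D.pair ((delG D c hn) x), pair_mem_delK D c ((delG D c hn) x).2⟩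
  invol := by
    intro x
    rw [OrderIso.symm_apply_eq]
    refine Subtype.ext ?_
    simp only [OrderIso.apply_symm_apply]
    exact D.invol _
  fpf := by
    intro x h
    have h2 := congrArg (fun z => (((delG D c hn) z : {x // x ∈ delK D c}) : Fin (2*n))) h
    simp only [OrderIso.apply_symm_apply] at h2
    exact D.fpf _ h2

noncomputable def delEmb : Fin (2*(n-1)) → Fin (2*n) := fun x => ((delG D c hn) x : Fin (2*n))

theorem delEmb_sm : StrictMono (delEmb D c hn) := by
  intro x y h
  exact Subtype.coe_lt_coe.mpr ((delG D c hn).strictMono h)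

theorem delD_comm (x : Fin (2*(n-1))) :
    D.pair (delEmb D c hn x) = delEmb D c hn ((delD D c hn).pair x) := by
  unfold delEmb delD
  simp only [OrderIso.apply_symm_apply]

theorem linked_del (x y : Fin (2*(n-1))) :
    (delD D c hn).Linked x y ↔ D.Linked (delEmb D c hn x) (delEmb D c hn y) := by
  unfold ChordDiagram.Linked
  simp only [delD_comm, ← Monotone.map_min (delEmb_sm D c hn).monotone,
    ← Monotone.map_max (delEmb_sm D c hn).monotone, (delEmb_sm D c hn).lt_iff_lt]

/-- chords of the deleted diagram, as chords of `D` -/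
noncomputable def delCh (q : {p : Fin (2*(n-1)) // p < (delD D c hn).pair p}) :
    {p : Fin (2*n) // p < D.pair p} :=
  ⟨delEmb D c hn q.1, by
    rw [delD_comm]
    exact (delEmb_sm D c hn) q.2⟩

theorem mem_delK_of_ne {d : {p : Fin (2*n) // p < D.pair p}} (hdc : d ≠ c) :
    d.1 ∈ delK D c := by
  rw [mem_delK]
  constructor
  · exact fun h => hdc (Subtype.ext h)
  · intro h
    have h2 : D.pair d.1 = c.1 := by rw [h, D.invol]
    have v1 := Fin.lt_def.mp d.2
    have v2 := Fin.lt_def.mp c.2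
    have v3 := congrArg Fin.val h
    have v4 := congrArg Fin.val h2
    omega

/-- chords of `D` other than `c`, as chords of the deleted diagram -/
noncomputable def delChInv (d : {p : Fin (2*n) // p < D.pair p}) (hdc : d ≠ c) :
    {p : Fin (2*(n-1)) // p < (delD D c hn).pair p} :=
  ⟨(delG D c hn).symm ⟨d.1, mem_delK_of_ne D c hdc⟩, by
    have h1 : (delD D c hn).pair ((delG D c hn).symm ⟨d.1, mem_delK_of_ne D c hdc⟩) =
        (delG D c hn).symm ⟨D.pair d.1, pair_mem_delK D c (mem_delK_of_ne D c hdc)⟩ := by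
      show (delG D c hn).symm ⟨D.pair (((delG D c hn) ((delG D c hn).symm ⟨d.1, _⟩)) : Fin (2*n)), _⟩ = _
      simp only [OrderIso.apply_symm_apply]
    rw [h1, OrderIso.lt_iff_lt]
    exact d.2⟩

theorem delCh_delChInv (d : {p : Fin (2*n) // p < D.pair p}) (hdc : d ≠ c) :
    delCh D c hn (delChInv D c hn d hdc) = d := by
  refine Subtype.ext ?_
  show ((delG D c hn) ((delG D c hn).symm ⟨d.1, _⟩) : Fin (2*n)) = d.1
  simp only [OrderIso.apply_symm_apply]

theorem delChInv_delCh (q : {p : Fin (2*(n-1)) // p < (delD D c hn).pair p}) (h : delCh D c hn q ≠ c) :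
    delChInv D c hn (delCh D c hn q) h = q := by
  refine Subtype.ext ?_
  show (delG D c hn).symm ⟨((delG D c hn) q.1 : Fin (2*n)), _⟩ = q.1
  exact (delG D c hn).symm_apply_apply q.1

theorem delCh_ne (q : {p : Fin (2*(n-1)) // p < (delD D c hn).pair p}) :
    delCh D c hn q ≠ c := by
  intro h
  have h1 : (delCh D c hn q).1 ∈ delK D c := ((delG D c hn) q.1).2
  rw [mem_delK] at h1
  exact h1.1 (congrArg Subtype.val h)

end Delete

theorem circle_induce_igraph :
    ∀ (n : ℕ) (D : ChordDiagram n) (s : Set {p : Fin (2*n) // p < D.pair p}),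
      IsCircleGraph ((D.igraph).induce s) := by
  intro n
  induction n using Nat.strong_induction_on with
  | _ n IH =>
    intro D s
    by_cases hs : s = Set.univ
    · subst hs
      exact ⟨n, D, ⟨SimpleGraph.induceUnivIso D.igraph⟩⟩
    · obtain ⟨c, hc⟩ := (Set.ne_univ_iff_exists_notMem s).mp hs
      have hn : 1 ≤ n := by have := c.1.isLt; omega
      have hcirc := IH (n-1) (by omega) (delD D c hn) {q | delCh D c hn q ∈ s}
      refine circle_of_iso ?_ hcirc
      refine ⟨⟨fun d => ⟨delChInv D c hn d.1 (fun h => hc (h ▸ d.2)), by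
          show delCh D c hn (delChInv D c hn d.1 _) ∈ s
          rw [delCh_delChInv]
          exact d.2⟩,
        fun q => ⟨delCh D c hn q.1, q.2⟩, ?_, ?_⟩, ?_⟩
      · intro d
        refine Subtype.ext ?_
        exact delCh_delChInv D c hn d.1 (fun h => hc (h ▸ d.2))
      · intro q
        refine Subtype.ext ?_
        exact delChInv_delCh D c hn q.1 (delCh_ne D c hn q.1)
      · intro d e
        show (delD D c hn).Linked (delChInv D c hn d.1 (fun h => hc (h ▸ d.2))).1
            (delChInv D c hn e.1 (fun h => hc (h ▸ e.2))).1 ↔ D.Linked d.1.1 e.1.1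
        rw [linked_del]
        have h1 : ∀ (d' : {p : Fin (2*n) // p < D.pair p}) (hd : d' ≠ c),
            delEmb D c hn (delChInv D c hn d' hd).1 = d'.1 :=
          fun d' hd => congrArg Subtype.val (delCh_delChInv D c hn d' hd)
        rw [h1, h1]

noncomputable def induceTransport {V W : Type*} {G : SimpleGraph V} {H : SimpleGraph W}
    (e : G ≃g H) (s : Set V) : (G.induce s) ≃g (H.induce ((fun x => e x) '' s)) := by
  refine ⟨Equiv.Set.image (fun x => e x) s (fun a b h => e.injective h), ?_⟩
  intro x y
  simp only [SimpleGraph.comap_adj, Function.Embedding.coe_subtype, Equiv.Set.image_apply]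
  exact e.map_rel_iff

theorem circle_induce {V : Type*} (G : SimpleGraph V) (s : Set V) (h : IsCircleGraph G) :
    IsCircleGraph (G.induce s) := by
  obtain ⟨n, D, ⟨e⟩⟩ := h
  exact circle_of_iso (induceTransport e s) (circle_induce_igraph n D _)

end CGAux

namespace CGAux

set_option maxHeartbeats 1000000

open LGraph

theorem toSimple_adj (G : LGraph) (a b : {x // x ∈ G.verts}) :
    G.toSimple.Adj a b ↔ G.adj (a : ℕ) (b : ℕ) = true := Iff.rfl

theorem xor_ite_bool (a : Bool) (B C : Prop) [Decidable C] (hBC : B ↔ C) :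
    (Xor' (a = true) B) ↔ ((if C then !a else a) = true) := by
  by_cases hC : C <;> cases a <;> simp [Xor', hC, hBC]

theorem o4_circ {G G' : LGraph} {u v : ℕ} (h : Omega4At G G' u v)
    (hG : IsCircleGraph G.toSimple) : IsCircleGraph G'.toSimple := by
  classical
  obtain ⟨hne, hadj, hfru, hfrv, hverts, hadjf, hrest⟩ := h
  have hu : u ∈ G.verts := (G.adj_mem u v hadj).1
  have hv : v ∈ G.verts := (G.adj_mem u v hadj).2
  have hpiv := pivot_circle (G.toSimple) ⟨u, hu⟩ ⟨v, hv⟩ hadj hG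
  refine circle_of_iso ⟨Equiv.subtypeEquivRight (fun x => by rw [hverts]), ?_⟩ hpiv
  intro x y
  rw [pivot_adj]
  simp only [Equiv.subtypeEquivRight_apply, toSimple_adj]
  rw [hadjf (x : ℕ) (y : ℕ)]
  refine xor_ite_bool _ _ _ ?_ <;>
    simp only [ne_eq, Subtype.mk.injEq, pivCond, Finset.mem_insert,
      Finset.mem_singleton, not_or, Bool.eq_false_iff] <;>
    tauto

theorem o4p_circ {G G' : LGraph} {v : ℕ} (h : Omega4pAt G G' v)
    (hG : IsCircleGraph G.toSimple) : IsCircleGraph G'.toSimple := by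
  classical
  obtain ⟨hv, hfr, hverts, hadjf, hrest⟩ := h
  have hlc := lc_circle (G.toSimple) ⟨v, hv⟩ hG
  refine circle_of_iso ⟨Equiv.subtypeEquivRight (fun x => by rw [hverts]), ?_⟩ hlc
  intro x y
  rw [localComp_adj]
  simp only [Equiv.subtypeEquivRight_apply, toSimple_adj]
  rw [hadjf (x : ℕ) (y : ℕ)]
  refine xor_ite_bool _ _ _ ?_ <;>
    simp only [ne_eq, Subtype.mk.injEq] <;>
    tauto

theorem del_circ (G : LGraph) (v : ℕ) (hG : IsCircleGraph G.toSimple) :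
    IsCircleGraph (G.delete v).toSimple := by
  classical
  have hind := circle_induce G.toSimple {x : {z // z ∈ G.verts} | (x : ℕ) ≠ v} hG
  refine circle_of_iso ⟨⟨fun x => ⟨⟨(x : ℕ), (Finset.mem_erase.mp x.2).2⟩,
      (Finset.mem_erase.mp x.2).1⟩,
    fun q => ⟨(q.1 : ℕ), Finset.mem_erase.mpr ⟨q.2, q.1.2⟩⟩,
    fun x => rfl, fun q => rfl⟩, ?_⟩ hind
  intro x y
  simp only [SimpleGraph.comap_adj, Function.Embedding.coe_subtype]
  show G.toSimple.Adj _ _ ↔ (G.delete v).toSimple.Adj x y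
  rw [toSimple_adj, toSimple_adj]
  show G.adj (x : ℕ) (y : ℕ) = true ↔
    (decide ((x:ℕ) ≠ v) && decide ((y:ℕ) ≠ v) && G.adj (x:ℕ) (y:ℕ)) = true
  simp [Bool.and_eq_true, decide_eq_true_eq, (Finset.mem_erase.mp x.2).1,
    (Finset.mem_erase.mp y.2).1]

theorem rstep_circ {G G' : LGraph} (h : RStep G G') (hG : IsCircleGraph G.toSimple) :
    IsCircleGraph G'.toSimple := by
  cases h with
  | o4 h4 => exact o4_circ h4 hG
  | o4p h4 => exact o4p_circ h4 hG
  | del v => exact del_circ G v hG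

end CGAux

/-- If a labeled graph is realisable (its underlying simple
graph is a circle graph) then so is every labeled graph obtained from it by a
finite sequence of moves `Ω4`, `Ω4'` and vertex deletions. In particular the
class of circle graphs is closed under local complementation, under pivoting
along an edge, and under taking induced subgraphs. -/
theorem realisable_closed_under_smoothing :
    (∀ G G' : LGraph, IsCircleGraph G.toSimple →
      Relation.ReflTransGen LGraph.RStep G G' → IsCircleGraph G'.toSimple) ∧
    (∀ (V : Type) [Fintype V] (G : SimpleGraph V) (v : V),
      IsCircleGraph G → IsCircleGraph (G.localComp v)) ∧
    (∀ (V : Type) [Fintype V] (G : SimpleGraph V) (u v : V), G.Adj u v →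
      IsCircleGraph G → IsCircleGraph (G.pivot u v)) ∧
    (∀ (V : Type) [Fintype V] (G : SimpleGraph V) (s : Set V),
      IsCircleGraph G → IsCircleGraph (G.induce s)) := by
  refine ⟨?_, ?_, ?_, ?_⟩
  · intro G G' hG hsteps
    induction hsteps with
    | refl => exact hG
    | tail hs hstep ih => exact CGAux.rstep_circ hstep ih
  · intro V _ G v hG
    exact CGAux.lc_circle G v hG
  · intro V _ G u v huv hG
    exact CGAux.pivot_circle G u v huv hG
  · intro V _ G s hG
    exact CGAux.circle_induce G s hG
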